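/- For real a and real parameters α > 0 and β with α - β > -1, the Laplace transform of t ↦ t^{α-β} E_{α, α-β+1}(-a t^α) at s > 0 with s^α > |a| equals s^{β-1}/(a + s^α). Equivalently, ∫_0^∞ e^{-st} t^{α-β} E_{α,α-β+1}(-a t^α) dt = s^{β-1}/(s^α + a). -/

import Mathlib

open MeasureTheory

/-- The real two-parameter Mittag-Leffler function `E_{μ,γ}(x) = ∑_k x^k / Γ(γ + μ k)`. -/
noncomputable def mittagLeffler (μ γ x : ℝ) : ℝ :=
  ∑' k : ℕ, x ^ k / Real.Gamma (γ + μ * k)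

lemma integrableOn_aux {q s : ℝ} (hq : -1 < q) (hs : 0 < s) :
    IntegrableOn (fun t : ℝ => t ^ q * Real.exp (-(s * t))) (Set.Ioi 0) := by
  have := integrableOn_rpow_mul_exp_neg_mul_rpow hq zero_lt_one hs
  simpa [Real.rpow_one, neg_mul] using this

/-- For real `a`, `α > 0`, `α - β > -1`, `s > 0` with `s^α > |a|`, the Laplace transform of
`t ↦ t^{α-β} E_{α,α-β+1}(-a t^α)` at `s` equals `s^{β-1}/(s^α + a)`. -/
theorem laplace_mittagLeffler (a α β s : ℝ) (hα : 0 < α) (hβ : -1 < α - β)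
    (hs : 0 < s) (ha : |a| < s ^ α) :
    ∫ t in Set.Ioi (0 : ℝ),
        Real.exp (-(s * t)) * t ^ (α - β) * mittagLeffler α (α - β + 1) (-(a * t ^ α))
      = s ^ (β - 1) / (s ^ α + a) := by
  have hA : (0:ℝ) < s ^ α := Real.rpow_pos_of_pos hs α
  have hAa : (0:ℝ) < s ^ α + a := by
    have := neg_abs_le a; linarith
  set ρ : ℕ → ℝ := fun k => α - β + 1 + α * k with hρ
  have hρpos : ∀ k : ℕ, 0 < ρ k := by
    intro k
    have : (0:ℝ) ≤ α * k := by positivity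
    simp only [hρ]; linarith
  have hρ1 : ∀ k : ℕ, -1 < ρ k - 1 := fun k => by linarith [hρpos k]
  have hΓpos : ∀ k : ℕ, 0 < Real.Gamma (ρ k) := fun k => Real.Gamma_pos_of_pos (hρpos k)
  set c : ℕ → ℝ := fun k => (-a) ^ k / Real.Gamma (ρ k) with hc
  set F : ℕ → ℝ → ℝ := fun k t => c k * (t ^ (ρ k - 1) * Real.exp (-(s * t))) with hF
  -- pointwise identity on Ioi 0
  have hpt : ∀ t ∈ Set.Ioi (0:ℝ),
      Real.exp (-(s * t)) * t ^ (α - β) * mittagLeffler α (α - β + 1) (-(a * t ^ α))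
        = ∑' k : ℕ, F k t := by
    intro t ht
    rw [Set.mem_Ioi] at ht
    unfold mittagLeffler
    rw [← tsum_mul_left]
    refine tsum_congr fun k => ?_
    have h1 : (-(a * t ^ α)) ^ k = (-a) ^ k * t ^ (α * k) := by
      rw [neg_mul_eq_neg_mul, mul_pow, ← Real.rpow_natCast (t ^ α) k,
        ← Real.rpow_mul ht.le]
    have h2 : ρ k - 1 = (α - β) + α * k := by simp only [hρ]; ring
    rw [h1]
    simp only [hF, hc, hρ]
    have h2' : α - β + 1 + α * (k:ℝ) - 1 = (α - β) + α * k := by ring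
    rw [h2', Real.rpow_add ht]
    have hΓ : Real.Gamma (α - β + 1 + α * (k:ℝ)) ≠ 0 := by
      have := hΓpos k; simp only [hρ] at this; exact this.ne'
    field_simp
  rw [setIntegral_congr_fun measurableSet_Ioi hpt]
  -- integrability of each term
  have hint : ∀ k : ℕ, IntegrableOn (F k) (Set.Ioi 0) := fun k =>
    ((integrableOn_aux (hρ1 k) hs).const_mul (c k))
  -- the value of each integral
  have hval : ∀ k : ℕ, ∫ t in Set.Ioi (0:ℝ), F k t
      = (-a) ^ k * (1 / s) ^ (ρ k) := by
    intro k
    simp only [hF]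
    rw [MeasureTheory.integral_const_mul, Real.integral_rpow_mul_exp_neg_mul_Ioi (hρpos k) hs]
    simp only [hc]
    rw [div_mul_eq_mul_div, mul_div_assoc, mul_div_assoc, div_self (hΓpos k).ne', mul_one]
  -- norms of the integrals
  have hnorm : ∀ k : ℕ, ∫ t in Set.Ioi (0:ℝ), ‖F k t‖
      = |a| ^ k * (1 / s) ^ (ρ k) := by
    intro k
    have : ∀ t ∈ Set.Ioi (0:ℝ), ‖F k t‖
        = |c k| * (t ^ (ρ k - 1) * Real.exp (-(s * t))) := by
      intro t ht
      rw [Set.mem_Ioi] at ht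
      rw [hF, norm_mul, Real.norm_eq_abs, Real.norm_eq_abs,
        abs_of_nonneg (by positivity : (0:ℝ) ≤ t ^ (ρ k - 1) * Real.exp (-(s * t)))]
    rw [setIntegral_congr_fun measurableSet_Ioi this, MeasureTheory.integral_const_mul,
      Real.integral_rpow_mul_exp_neg_mul_Ioi (hρpos k) hs]
    have : |c k| = |a| ^ k / Real.Gamma (ρ k) := by
      rw [hc, abs_div, abs_pow, abs_neg, abs_of_nonneg (hΓpos k).le]
    rw [this, div_mul_eq_mul_div, mul_div_assoc, mul_div_assoc, div_self (hΓpos k).ne', mul_one]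
  -- geometric data
  have hr : |a| * (s ^ α)⁻¹ < 1 := by
    rw [mul_inv_lt_iff₀ hA, one_mul]; exact ha
  have hρsplit : ∀ k : ℕ, (1 / s) ^ (ρ k)
      = (1 / s) ^ (α - β + 1) * ((s ^ α)⁻¹) ^ k := by
    intro k
    have h1s : (0:ℝ) < 1 / s := by positivity
    have hinv : (s ^ α)⁻¹ = (1 / s) ^ α := by
      rw [one_div, Real.inv_rpow hs.le]
    simp only [hρ]
    rw [hinv, Real.rpow_add h1s, ← Real.rpow_natCast ((1/s) ^ α) k, ← Real.rpow_mul h1s.le]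
  -- summability of the norms
  have hsum : Summable fun k : ℕ => ∫ t in Set.Ioi (0:ℝ), ‖F k t‖ := by
    simp only [hnorm]
    have : (fun k : ℕ => |a| ^ k * (1 / s) ^ (ρ k))
        = fun k : ℕ => (1 / s) ^ (α - β + 1) * (|a| * (s ^ α)⁻¹) ^ k := by
      funext k; rw [hρsplit k, mul_pow]; ring
    rw [this]
    exact (summable_geometric_of_lt_one (by positivity) hr).mul_left _
  rw [← MeasureTheory.integral_tsum_of_summable_integral_norm hint hsum]
  -- compute the sum
  have : (fun k : ℕ => ∫ t in Set.Ioi (0:ℝ), F k t)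
      = fun k : ℕ => (1 / s) ^ (α - β + 1) * ((-a) * (s ^ α)⁻¹) ^ k := by
    funext k; rw [hval k, hρsplit k, mul_pow]; ring
  rw [this, tsum_mul_left, tsum_geometric_of_norm_lt_one (by
    rw [Real.norm_eq_abs, abs_mul, abs_neg, abs_inv, abs_of_nonneg hA.le]; exact hr)]
  -- final algebra
  have hkey : (1 / s) ^ (α - β + 1) * s ^ α = s ^ (β - 1) := by
    rw [one_div, ← Real.rpow_neg_one s, ← Real.rpow_mul hs.le, ← Real.rpow_add hs]
    congr 1
    ring
  have h1 : (1 - -a * (s ^ α)⁻¹)⁻¹ = s ^ α / (s ^ α + a) := by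
    rw [← inv_div]
    congr 1
    field_simp
    ring
  rw [h1, mul_div_assoc', hkey]
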